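/- Let f be a consensus function on the n-cube Q_n. Then f equals the median function Med if and only if f satisfies the Translation property (T) and for every profile π = (x₁,…,x_k): the all-zeros vertex 𝟎 belongs to f(π) if and only if Σ_{j=1}^k xᵢ^j ≤ k/2 for every coordinate i ∈ {1,…,n}. -/

import Mathlib

/-- A vertex of the n-cube `Q_n`: an element of `{0,1}^n`. -/
abbrev Vertex (n : ℕ) := Fin n → Bool

/-- Coordinatewise addition modulo 2 (`u ⊕ v`). -/
def vxor {n : ℕ} (u v : Vertex n) : Vertex n := fun i => xor (u i) (v i)

/-- A profile: a nonempty finite sequence of vertices of `Q_n`. -/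
def Profile (n : ℕ) := { l : List (Vertex n) // l ≠ [] }

/-- Translation of a profile: `π ⊕ v = (x₁ ⊕ v, …, x_k ⊕ v)`. -/
def pxor {n : ℕ} (π : Profile n) (v : Vertex n) : Profile n :=
  ⟨π.1.map (fun x => vxor x v), by simpa using π.2⟩

/-- The Translation property (T) for a consensus function. -/
def Translation {n : ℕ} (f : Profile n → Set (Vertex n)) : Prop :=
  ∀ (π : Profile n) (u v : Vertex n), u ∈ f π → vxor u v ∈ f (pxor π v)

/-- Hamming distance on the n-cube. -/
def cubeDist {n : ℕ} (u v : Vertex n) : ℕ := hammingDist u v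

/-- The all-zeros vertex `𝟎`. -/
def zeroV (n : ℕ) : Vertex n := fun _ => false

/-- `‖u‖ = d(𝟎,u)`, the number of ones in `u`. -/
def vnorm {n : ℕ} (u : Vertex n) : ℕ := cubeDist (zeroV n) u

/-- `‖π‖ = max{‖x₁‖,…,‖x_k‖}`. -/
def pnorm {n : ℕ} (π : Profile n) : ℕ := (π.1.map vnorm).foldr max 0

/-- Eccentricity `e(x, π) = max_j d(x, x_j)`. -/
def ecc {n : ℕ} (π : Profile n) (x : Vertex n) : ℕ :=
  (π.1.map (fun y => cubeDist x y)).foldr max 0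

/-- The center function. -/
def Cen {n : ℕ} (π : Profile n) : Set (Vertex n) :=
  {x | ∀ y : Vertex n, ecc π x ≤ ecc π y}

/-- Status `S_π(x) = Σ_j d(x, x_j)`. -/
def status {n : ℕ} (π : Profile n) (x : Vertex n) : ℕ :=
  (π.1.map (fun y => cubeDist x y)).sum

/-- The median function. -/
def Med {n : ℕ} (π : Profile n) : Set (Vertex n) :=
  {x | ∀ y : Vertex n, status π x ≤ status π y}

/-- The anti-median function. -/
def AM {n : ℕ} (π : Profile n) : Set (Vertex n) :=
  {x | ∀ y : Vertex n, status π y ≤ status π x}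

/-- `Σ_{j=1}^k xᵢ^j`: the number of profile entries with a 1 in coordinate `i`. -/
def cnt {n : ℕ} (π : Profile n) (i : Fin n) : ℕ :=
  (π.1.map (fun x => if x i then 1 else 0)).sum

/-- The majority vertex `Maj(π)`: `wᵢ = 1` iff `Σ_j xᵢ^j > k/2`. -/
def Maj {n : ℕ} (π : Profile n) : Vertex n :=
  fun i => decide (π.1.length < 2 * cnt π i)

/-- The minority vertex `Min(π)`: `mᵢ = 1` iff `Σ_j xᵢ^j < k/2`. -/
def MinV {n : ℕ} (π : Profile n) : Vertex n :=
  fun i => decide (2 * cnt π i < π.1.length)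

/-- The Condorcet score `Cs(π)`. -/
def Cs {n : ℕ} (π : Profile n) : ℕ :=
  (Finset.univ.filter (fun i : Fin n => 2 * cnt π i = π.1.length)).card

/-- The Majority property (Maj). -/
def MajProp {n : ℕ} (f : Profile n → Set (Vertex n)) : Prop :=
  ∀ π : Profile n, Maj π ∈ f π

/-- The Minority property (Min). -/
def MinProp {n : ℕ} (f : Profile n → Set (Vertex n)) : Prop :=
  ∀ π : Profile n, MinV π ∈ f π

/-- The Restricted Range property (RR): `|f(π)| ≤ 2^{Cs(π)}`. -/
def RestrictedRange {n : ℕ} (f : Profile n → Set (Vertex n)) : Prop :=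
  ∀ π : Profile n, (f π).ncard ≤ 2 ^ Cs π

/-- The `ℓ_p` status `ℓ_pS_π(x) = Σ_j d(x,x_j)^p`. -/
noncomputable def lpStatus {n : ℕ} (p : ℝ) (π : Profile n) (x : Vertex n) : ℝ :=
  (π.1.map (fun y => (cubeDist x y : ℝ) ^ p)).sum

/-- The `ℓ_p`-function. -/
noncomputable def lpFun {n : ℕ} (p : ℝ) (π : Profile n) : Set (Vertex n) :=
  {x | ∀ y : Vertex n, lpStatus p π x ≤ lpStatus p π y}

/-- The `p`-Characteristic `Char_p(π) = Σ_j ‖x_j‖^p`. -/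
noncomputable def Charp {n : ℕ} (p : ℝ) (π : Profile n) : ℝ :=
  (π.1.map (fun x => (vnorm x : ℝ) ^ p)).sum

/-- Concatenation of profiles `π₁π₂`. -/
def pconcat {n : ℕ} (π₁ π₂ : Profile n) : Profile n :=
  ⟨π₁.1 ++ π₂.1, by simp [π₁.2]⟩

/-- The profile of length one consisting of the single vertex `x`. -/
def singleP {n : ℕ} (x : Vertex n) : Profile n := ⟨[x], by simp⟩

/-- The Consistency property (C). -/
def Consistency {n : ℕ} (f : Profile n → Set (Vertex n)) : Prop :=
  ∀ π₁ π₂ : Profile n, (f π₁ ∩ f π₂).Nonempty → f (pconcat π₁ π₂) = f π₁ ∩ f π₂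

section stmt4aux
variable {n : ℕ}

lemma vxor_self' (u : Vertex n) : vxor u u = zeroV n := by
  funext i; simp [vxor, zeroV]

lemma vxor_zero_left' (u : Vertex n) : vxor (zeroV n) u = u := by
  funext i; simp [vxor, zeroV]

lemma vxor_vxor' (x v : Vertex n) : vxor (vxor x v) v = x := by
  funext i; simp [vxor]

lemma pxor_pxor' (π : Profile n) (v : Vertex n) : pxor (pxor π v) v = π := by
  apply Subtype.ext
  simp [pxor, List.map_map, Function.comp_def, vxor_vxor']

lemma vxor_zero_right' (u : Vertex n) : vxor u (zeroV n) = u := by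
  funext i; simp [vxor, zeroV]

lemma pxor_zero' (π : Profile n) : pxor π (zeroV n) = π := by
  apply Subtype.ext
  simp [pxor, vxor_zero_right']

lemma pxor_length' (π : Profile n) (v : Vertex n) :
    (pxor π v).1.length = π.1.length := by
  simp [pxor]

lemma cubeDist_vxor (x y v : Vertex n) :
    cubeDist (vxor x v) (vxor y v) = cubeDist x y := by
  unfold cubeDist hammingDist
  congr 1
  apply Finset.filter_congr
  intro i _
  simp only [vxor]
  cases x i <;> cases y i <;> cases v i <;> simp

lemma status_pxor (π : Profile n) (x v : Vertex n) :
    status (pxor π v) (vxor x v) = status π x := by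
  simp [status, pxor, List.map_map, Function.comp_def, cubeDist_vxor]

lemma cnt_pxor' (π : Profile n) (x : Vertex n) (i : Fin n) :
    cnt (pxor π x) i = (π.1.map (fun y => if xor (y i) (x i) then 1 else 0)).sum := by
  simp only [cnt, pxor, List.map_map, Function.comp_def, vxor]
  rfl

lemma list_cnt_flip (l : List (Vertex n)) (b c : Bool) (h : b ≠ c) (i : Fin n) :
    (l.map (fun y => if xor (y i) b then 1 else 0)).sum
      + (l.map (fun y => if xor (y i) c then 1 else 0)).sum = l.length := by
  induction l with
  | nil => simp
  | cons a t ih =>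
    simp only [List.map_cons, List.sum_cons, List.length_cons]
    have h1 : ((if xor (a i) b then 1 else 0) : ℕ)
        + (if xor (a i) c then 1 else 0) = 1 := by
      cases hb : a i <;> cases b <;> cases c <;> simp_all
    have h2 : ∀ (A S1 B S2 : ℕ), A + S1 + (B + S2) = A + B + (S1 + S2) := by
      intros; ring
    rw [h2, h1, ih, Nat.add_comm]

lemma cnt_add_flip (π : Profile n) (x y : Vertex n) (i : Fin n) (h : x i ≠ y i) :
    cnt (pxor π x) i + cnt (pxor π y) i = π.1.length := by
  rw [cnt_pxor', cnt_pxor']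
  exact list_cnt_flip π.1 (x i) (y i) h i

lemma cnt_same (π : Profile n) (x y : Vertex n) (i : Fin n) (h : x i = y i) :
    cnt (pxor π x) i = cnt (pxor π y) i := by
  rw [cnt_pxor', cnt_pxor', h]

lemma cubeDist_eq_sum (x a : Vertex n) :
    cubeDist x a = ∑ i : Fin n, if xor (a i) (x i) then 1 else 0 := by
  unfold cubeDist hammingDist
  rw [Finset.card_filter]
  apply Finset.sum_congr rfl
  intro i _
  cases x i <;> cases a i <;> simp

lemma status_eq (π : Profile n) (x : Vertex n) :
    status π x = ∑ i : Fin n, cnt (pxor π x) i := by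
  simp only [status, cnt_pxor']
  induction π.1 with
  | nil => simp
  | cons a t ih =>
    simp only [List.map_cons, List.sum_cons, Finset.sum_add_distrib, ih]
    congr 1
    exact cubeDist_eq_sum x a

lemma med_iff (π : Profile n) (x : Vertex n) :
    x ∈ Med π ↔ ∀ i : Fin n, 2 * cnt (pxor π x) i ≤ π.1.length := by
  constructor
  · intro hx i
    set y : Vertex n := Function.update x i (!(x i)) with hy
    have hxy : x i ≠ y i := by simp [hy]
    have hflip := cnt_add_flip π x y i hxy
    have hle : status π x ≤ status π y := hx y
    rw [status_eq, status_eq] at hle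
    have hsame : ∀ j ∈ Finset.univ.erase i,
        cnt (pxor π x) j = cnt (pxor π y) j := by
      intro j hj
      apply cnt_same
      simp [hy, Function.update_of_ne (Finset.ne_of_mem_erase hj)]
    have hS : ∑ j ∈ Finset.univ.erase i, cnt (pxor π x) j
        = ∑ j ∈ Finset.univ.erase i, cnt (pxor π y) j :=
      Finset.sum_congr rfl hsame
    have hx' : ∑ j ∈ Finset.univ.erase i, cnt (pxor π x) j + cnt (pxor π x) i
        = ∑ j : Fin n, cnt (pxor π x) j :=
      Finset.sum_erase_add _ _ (Finset.mem_univ i)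
    have hy' : ∑ j ∈ Finset.univ.erase i, cnt (pxor π y) j + cnt (pxor π y) i
        = ∑ j : Fin n, cnt (pxor π y) j :=
      Finset.sum_erase_add _ _ (Finset.mem_univ i)
    omega
  · intro h y
    rw [status_eq, status_eq]
    apply Finset.sum_le_sum
    intro i _
    by_cases hxy : x i = y i
    · rw [cnt_same π x y i hxy]
    · have hflip := cnt_add_flip π x y i hxy
      have := h i
      omega

lemma mem_f_iff_zero {f : Profile n → Set (Vertex n)} (hT : Translation f)
    (π : Profile n) (u : Vertex n) :
    u ∈ f π ↔ zeroV n ∈ f (pxor π u) := by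
  constructor
  · intro hu
    have := hT π u u hu
    rwa [vxor_self'] at this
  · intro h0
    have := hT (pxor π u) (zeroV n) u h0
    rwa [vxor_zero_left', pxor_pxor'] at this

end stmt4aux

/-- `f = Med` iff `f` satisfies (T) and for every profile `π`,
`𝟎 ∈ f(π)` iff `Σ_{j=1}^k xᵢ^j ≤ k/2` for every coordinate `i`. -/
theorem stmt4 {n : ℕ} (f : Profile n → Set (Vertex n))
    (hf : ∀ π : Profile n, (f π).Nonempty) :
    f = Med ↔
      (Translation f ∧
        ∀ π : Profile n, (zeroV n ∈ f π ↔ ∀ i : Fin n, 2 * cnt π i ≤ π.1.length)) := by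
  constructor
  · rintro rfl
    constructor
    · intro π u v hu y
      rw [status_pxor]
      have : status (pxor π v) y = status π (vxor y v) := by
        have := status_pxor π (vxor y v) v
        rwa [vxor_vxor'] at this
      rw [this]
      exact hu (vxor y v)
    · intro π
      have := med_iff π (zeroV n)
      rwa [pxor_zero'] at this
  · rintro ⟨hT, hZ⟩
    funext π
    ext u
    rw [mem_f_iff_zero hT π u, hZ (pxor π u)]
    have hlen : (pxor π u).1.length = π.1.length := pxor_length' π u
    rw [med_iff π u]
    constructor
    · intro h i; rw [← hlen]; exact h i
    · intro h i; rw [hlen]; exact h i
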